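/- For every real k ≠ 0, one has ξ(k) − ω(k)⁴ ≠ 0, and there exists a continuously differentiable function φ : ℝ → ℂ that is twice differentiable at every x ∉ {−b, 0} and satisfies −φ''(x) + V(x)φ(x) = k²φ(x) for all x ∉ {−b, 0}, together with φ(x) = T(k)e^{−ikx} for all x ≤ −b and φ(x) = e^{−ikx} + R(k)e^{ikx} for all x ≥ 0. (This exhibits R(k) and T(k) as the right reflection and transmission coefficients of the block potential V.) -/

import Mathlib

open Complex

/-- `ω(k) = k/a + ((k/a)² + 1)^{1/2}` with the principal branch of the square root. -/
noncomputable def omg (a : ℝ) (k : ℂ) : ℂ :=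
  k / (a : ℂ) + ((k / (a : ℂ)) ^ 2 + 1) ^ ((1 : ℂ) / 2)

/-- `ξ(k) = exp(i·a·b·(ω(k) + 1/ω(k)))`. -/
noncomputable def xi (a b : ℝ) (k : ℂ) : ℂ :=
  Complex.exp (Complex.I * (a : ℂ) * (b : ℂ) * (omg a k + 1 / omg a k))

/-- Right reflection coefficient of the block potential `−a²·χ_{[−b,0]}`. -/
noncomputable def Rcoef (a b : ℝ) (k : ℂ) : ℂ :=
  omg a k ^ 2 * (1 - xi a b k) / (xi a b k - omg a k ^ 4)

/-- Left reflection coefficient of the block potential `−a²·χ_{[−b,0]}`. -/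
noncomputable def Lcoef (a b : ℝ) (k : ℂ) : ℂ :=
  Rcoef a b k * Complex.exp (-Complex.I * (a : ℂ) * (b : ℂ) * (omg a k - 1 / omg a k))

/-- Transmission coefficient of the block potential `−a²·χ_{[−b,0]}`. -/
noncomputable def Tcoef (a b : ℝ) (k : ℂ) : ℂ :=
  (1 - omg a k ^ 4) / (xi a b k - omg a k ^ 4) * Complex.exp (Complex.I * (a : ℂ) * (b : ℂ) / omg a k)

/-- The block (well) potential `V = −a²·χ_{[−b,0]}`, complex-valued. -/
noncomputable def Vblock (a b : ℝ) (x : ℝ) : ℂ :=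
  if -b ≤ x ∧ x ≤ 0 then -(a : ℂ) ^ 2 else 0

private lemma hasDerivAt_cexp_mul (c : ℂ) (x : ℝ) :
    HasDerivAt (fun y : ℝ => Complex.exp (c * y)) (c * Complex.exp (c * x)) x := by
  have h1 : HasDerivAt (fun y : ℝ => (y : ℂ)) 1 x := Complex.ofRealCLM.hasDerivAt
  simpa [mul_comm] using (h1.const_mul c).cexp

private lemma hasDerivAt_amul (A c : ℂ) (x : ℝ) :
    HasDerivAt (fun y : ℝ => A * Complex.exp (c * y)) (A * c * Complex.exp (c * x)) x := by
  simpa [mul_assoc] using (hasDerivAt_cexp_mul c x).const_mul A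

private lemma continuous_acexp (A c : ℂ) : Continuous (fun y : ℝ => A * Complex.exp (c * y)) := by
  fun_prop

private lemma glue_left {f g : ℝ → ℂ} {c x : ℝ} {d : ℂ} (hx : x < c)
    (hf : HasDerivAt f d x) : HasDerivAt (fun y => if y ≤ c then f y else g y) d x := by
  apply hf.congr_of_eventuallyEq
  filter_upwards [Iio_mem_nhds hx] with y hy
  simp [le_of_lt (Set.mem_Iio.mp hy)]

private lemma glue_right {f g : ℝ → ℂ} {c x : ℝ} {d : ℂ} (hx : c < x)
    (hg : HasDerivAt g d x) : HasDerivAt (fun y => if y ≤ c then f y else g y) d x := by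
  apply hg.congr_of_eventuallyEq
  filter_upwards [Ioi_mem_nhds hx] with y hy
  simp [not_le.mpr (Set.mem_Ioi.mp hy)]

private lemma glue_mid {f g : ℝ → ℂ} {c : ℝ} {d : ℂ} (hfg : f c = g c) (hf : HasDerivAt f d c)
    (hg : HasDerivAt g d c) : HasDerivAt (fun y => if y ≤ c then f y else g y) d c := by
  have h1 : HasDerivWithinAt (fun y => if y ≤ c then f y else g y) d (Set.Iic c) c :=
    (hf.hasDerivWithinAt).congr (fun y hy => by simp [Set.mem_Iic.mp hy]) (by simp)
  have h2 : HasDerivWithinAt (fun y => if y ≤ c then f y else g y) d (Set.Ici c) c := by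
    refine (hg.hasDerivWithinAt).congr (fun y hy => ?_) (by simp [hfg])
    rcases eq_or_lt_of_le (Set.mem_Ici.mp hy) with h | h
    · simp [← h, hfg]
    · simp [not_le.mpr h]
  have := h1.union h2
  rwa [Set.Iic_union_Ici, hasDerivWithinAt_univ] at this

set_option maxHeartbeats 2000000 in
theorem block_right_jost (a b : ℝ) (ha : 0 < a) (hb : 0 < b) (k : ℝ) (hk : k ≠ 0) :
    xi a b (k : ℂ) - omg a (k : ℂ) ^ 4 ≠ 0 ∧
    ∃ φ : ℝ → ℂ, ContDiff ℝ 1 φ ∧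
      (∀ x : ℝ, x ∉ ({-b, 0} : Set ℝ) → DifferentiableAt ℝ (deriv φ) x) ∧
      (∀ x : ℝ, x ∉ ({-b, 0} : Set ℝ) →
        -(deriv (deriv φ) x) + Vblock a b x * φ x = (k : ℂ) ^ 2 * φ x) ∧
      (∀ x : ℝ, x ≤ -b →
        φ x = Tcoef a b (k : ℂ) * Complex.exp (-Complex.I * (k : ℂ) * (x : ℂ))) ∧
      (∀ x : ℝ, 0 ≤ x →
        φ x = Complex.exp (-Complex.I * (k : ℂ) * (x : ℂ)) +
          Rcoef a b (k : ℂ) * Complex.exp (Complex.I * (k : ℂ) * (x : ℂ))) := by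
  -- real preliminaries
  set s : ℝ := Real.sqrt ((k/a)^2+1) with hs_def
  have hs0 : 0 ≤ s := Real.sqrt_nonneg _
  have hs2 : s^2 = (k/a)^2+1 := Real.sq_sqrt (by positivity)
  have hs1 : 1 ≤ s := by nlinarith
  set wr : ℝ := k/a + s with hwr_def
  have hprod : wr * (s - k/a) = 1 := by rw [hwr_def]; linear_combination hs2
  have hwr_pos : 0 < wr := by
    by_contra hneg
    push_neg at hneg
    have h2 : (0:ℝ) ≤ s - k/a := by rw [hwr_def] at hneg; linarith
    nlinarith [mul_nonpos_of_nonpos_of_nonneg hneg h2]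
  have hwr_ne1 : wr ≠ 1 := by
    intro h
    have hs' : s = 1 - k/a := by rw [hwr_def] at h; linarith
    have hka : k/a = 0 := by linear_combination (-(1:ℝ)/2)*hs2 + ((s+1-k/a)/2)*hs'
    rw [div_eq_zero_iff] at hka
    rcases hka with h' | h'
    · exact hk h'
    · exact ha.ne' h'
  set κ : ℝ := a*s with hκ_def
  have hκpos : 0 < κ := by rw [hκ_def]; nlinarith
  have hκ2 : κ^2 = k^2 + a^2 := by
    rw [hκ_def]; field_simp [mul_pow, hs2]; rw [hs2]; field_simp
  -- complex side
  have hwc : omg a (k:ℂ) = ((wr : ℝ) : ℂ) := by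
    rw [omg, show ((k:ℂ)/(a:ℂ)) = ((k/a : ℝ) : ℂ) by push_cast; ring]
    rw [show (((k/a:ℝ):ℂ))^2 + 1 = (((k/a)^2 + 1 : ℝ) : ℂ) by push_cast; ring]
    rw [show ((1:ℂ)/2) = ((1/2 : ℝ) : ℂ) by norm_num, ← Complex.ofReal_cpow (by positivity),
      ← Real.sqrt_eq_rpow]
    push_cast [hwr_def, hs_def]
    ring
  set w : ℂ := omg a (k:ℂ) with hw_def
  have hw0 : w ≠ 0 := by
    rw [hwc]; exact_mod_cast ne_of_gt hwr_pos
  have ha0 : (a:ℂ) ≠ 0 := by exact_mod_cast ha.ne'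
  have hrel1 : 2*(k:ℂ)*w = a*(w^2-1) := by
    rw [hwc]
    have : 2*k*wr = a*(wr^2-1) := by
      have hinv : a * (k/a) = k := by field_simp
      rw [hwr_def]; linear_combination (-a)*hs2 + (-2*s - 2*(k/a))*hinv
    exact_mod_cast this
  have hrel2 : 2*(κ:ℂ)*w = a*(w^2+1) := by
    rw [hwc]
    have : 2*κ*wr = a*(wr^2+1) := by
      rw [hκ_def, hwr_def]; linear_combination a*hs2
    exact_mod_cast this
  have hcore : (κ:ℂ)*(1-w^2) = -(k:ℂ)*(1+w^2) := by
    have h2w : (2:ℂ)*w ≠ 0 := by simp [hw0]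
    apply mul_left_cancel₀ h2w
    linear_combination (1-w^2)*hrel2 + (1+w^2)*hrel1
  have hκ2c : (κ:ℂ)^2 = (k:ℂ)^2 + (a:ℂ)^2 := by exact_mod_cast hκ2
  set u : ℂ := Complex.exp (Complex.I*(κ:ℂ)*(b:ℂ)) with hu_def
  have hu : u ≠ 0 := Complex.exp_ne_zero _
  set v : ℂ := Complex.exp (Complex.I*(k:ℂ)*(b:ℂ)) with hv_def
  have hv : v ≠ 0 := Complex.exp_ne_zero _
  have hxi2 : xi a b (k:ℂ) = u^2 := by
    rw [xi, ← hw_def, hu_def, ← Complex.exp_nat_mul]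
    congr 1
    field_simp
    linear_combination (-(b:ℂ))*hrel2
  have hTe : Complex.exp (Complex.I*(a:ℂ)*(b:ℂ)/w) = u * v⁻¹ := by
    rw [hu_def, hv_def, ← Complex.exp_neg, ← Complex.exp_add]
    congr 1
    field_simp
    linear_combination (-(b:ℂ)/2)*hrel2 + ((b:ℂ)/2)*hrel1
  have hΔ : xi a b (k:ℂ) - w^4 ≠ 0 := by
    rw [sub_ne_zero]
    intro h
    have habs : ‖xi a b (k:ℂ)‖ = 1 := by
      rw [hxi2, hu_def, norm_pow, Complex.norm_exp]
      simp
    rw [h, hwc] at habs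
    have h4 : wr^4 = 1 := by
      rw [← Complex.ofReal_pow, Complex.norm_real, Real.norm_eq_abs, abs_of_pos (by positivity)] at habs
      exact habs
    rcases lt_trichotomy wr 1 with h1 | h1 | h1
    · nlinarith [pow_lt_one₀ hwr_pos.le h1 (by norm_num : (4:ℕ) ≠ 0)]
    · exact hwr_ne1 h1
    · nlinarith [one_lt_pow₀ h1 (by norm_num : (4:ℕ) ≠ 0)]
  refine ⟨hΔ, ?_⟩
  have hΔu : u^2 - w^4 ≠ 0 := by rw [← hxi2]; exact hΔ
  -- coefficients
  set Rc : ℂ := Rcoef a b (k:ℂ) with hRc_def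
  set Tc : ℂ := Tcoef a b (k:ℂ) with hTc_def
  have hRc : Rc = w^2*(1 - u^2)/(u^2 - w^4) := by
    rw [hRc_def, Rcoef, ← hw_def, hxi2]
  have hTc : Tc = (1 - w^4)/(u^2 - w^4) * (u * v⁻¹) := by
    rw [hTc_def, Tcoef, ← hw_def, hxi2, hTe]
  set Cc : ℂ := w^2*(1-w^2)/(u^2 - w^4) with hCc_def
  set Dc : ℂ := u^2*(1-w^2)/(u^2 - w^4) with hDc_def
  -- the wave numbers
  set c1 : ℂ := -Complex.I * (k:ℂ) with hc1_def
  set c2 : ℂ := Complex.I * (k:ℂ) with hc2_def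
  set d1 : ℂ := -Complex.I * (κ:ℂ) with hd1_def
  set d2 : ℂ := Complex.I * (κ:ℂ) with hd2_def
  have hc1sq : c1*c1 = -((k:ℂ)^2) := by rw [hc1_def]; linear_combination (k:ℂ)^2 * Complex.I_sq
  have hc2sq : c2*c2 = -((k:ℂ)^2) := by rw [hc2_def]; linear_combination (k:ℂ)^2 * Complex.I_sq
  have hd1sq : d1*d1 = -((κ:ℂ)^2) := by rw [hd1_def]; linear_combination (κ:ℂ)^2 * Complex.I_sq
  have hd2sq : d2*d2 = -((κ:ℂ)^2) := by rw [hd2_def]; linear_combination (κ:ℂ)^2 * Complex.I_sq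
  -- the three pieces and their derivatives
  set F1 : ℝ → ℂ := fun x => Tc * Complex.exp (c1 * x) with hF1_def
  set F2 : ℝ → ℂ := fun x => Cc * Complex.exp (d1 * x) + Dc * Complex.exp (d2 * x) with hF2_def
  set F3 : ℝ → ℂ := fun x => Complex.exp (c1 * x) + Rc * Complex.exp (c2 * x) with hF3_def
  set F1' : ℝ → ℂ := fun x => Tc * c1 * Complex.exp (c1 * x) with hF1'_def
  set F2' : ℝ → ℂ := fun x => Cc * d1 * Complex.exp (d1 * x) + Dc * d2 * Complex.exp (d2 * x)
    with hF2'_def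
  set F3' : ℝ → ℂ := fun x => c1 * Complex.exp (c1 * x) + Rc * c2 * Complex.exp (c2 * x)
    with hF3'_def
  have hdF1 : ∀ x : ℝ, HasDerivAt F1 (F1' x) x := fun x => hasDerivAt_amul Tc c1 x
  have hdF2 : ∀ x : ℝ, HasDerivAt F2 (F2' x) x := fun x =>
    (hasDerivAt_amul Cc d1 x).add (hasDerivAt_amul Dc d2 x)
  have hdF3 : ∀ x : ℝ, HasDerivAt F3 (F3' x) x := fun x =>
    (hasDerivAt_cexp_mul c1 x).add (hasDerivAt_amul Rc c2 x)
  -- exponential values at the junctions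
  have ed1b : Complex.exp (d1 * ((-b : ℝ) : ℂ)) = u := by
    rw [hd1_def, hu_def]; congr 1; push_cast; ring
  have ed2b : Complex.exp (d2 * ((-b : ℝ) : ℂ)) = u⁻¹ := by
    rw [hd2_def, hu_def, ← Complex.exp_neg]; congr 1; push_cast; ring
  have ec1b : Complex.exp (c1 * ((-b : ℝ) : ℂ)) = v := by
    rw [hc1_def, hv_def]; congr 1; push_cast; ring
  -- junction conditions
  have j1 : F1 (-b) = F2 (-b) := by
    rw [hF1_def, hF2_def]
    simp only [ed1b, ed2b, ec1b]
    rw [hTc, hCc_def, hDc_def]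
    field_simp
    ring
  have j1' : F1' (-b) = F2' (-b) := by
    rw [hF1'_def, hF2'_def]
    simp only [ed1b, ed2b, ec1b]
    rw [hTc, hCc_def, hDc_def, hc1_def, hd1_def, hd2_def]
    linear_combination (norm := (field_simp; ring)) (-Complex.I*u*(1-w^2)/(u^2-w^4)) * hcore
  have j2 : F2 0 = F3 0 := by
    rw [hF2_def, hF3_def]
    norm_num
    rw [hRc, hCc_def, hDc_def]
    field_simp
    ring
  have j2' : F2' 0 = F3' 0 := by
    rw [hF2'_def, hF3'_def]
    norm_num
    rw [hRc, hCc_def, hDc_def, hc1_def, hc2_def, hd1_def, hd2_def]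
    linear_combination (norm := (field_simp; ring)) (Complex.I*(u^2-w^2)/(u^2-w^4)) * hcore
  -- the glued function
  set G : ℝ → ℂ := fun x => if x ≤ (0:ℝ) then F2 x else F3 x with hG_def
  set G' : ℝ → ℂ := fun x => if x ≤ (0:ℝ) then F2' x else F3' x with hG'_def
  set φ : ℝ → ℂ := fun x => if x ≤ -b then F1 x else G x with hφ_def
  set ψ : ℝ → ℂ := fun x => if x ≤ -b then F1' x else G' x with hψ_def
  have hdG : ∀ x : ℝ, HasDerivAt G (G' x) x := by
    intro x
    rcases lt_trichotomy x 0 with hx | hx | hx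
    · rw [hG'_def]; simp only [hx.le, if_pos]
      exact glue_left hx (hdF2 x)
    · subst hx
      rw [hG'_def]; simp only [le_refl, if_pos]
      exact glue_mid j2 (hdF2 0) (j2' ▸ hdF3 0)
    · rw [hG'_def]; simp only [not_le.mpr hx, if_neg, if_false]
      exact glue_right hx (hdF3 x)
  have hGmb : G (-b) = F1 (-b) := by
    rw [hG_def]; simp only [if_pos (by linarith : (-b:ℝ) ≤ 0)]; exact j1.symm
  have hG'mb : G' (-b) = F1' (-b) := by
    rw [hG'_def]; simp only [if_pos (by linarith : (-b:ℝ) ≤ 0)]; exact j1'.symm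
  have hdφ : ∀ x : ℝ, HasDerivAt φ (ψ x) x := by
    intro x
    rcases lt_trichotomy x (-b) with hx | hx | hx
    · rw [hψ_def]; simp only [hx.le, if_pos]
      exact glue_left hx (hdF1 x)
    · subst hx
      rw [hψ_def]; simp only [le_refl, if_pos]
      exact glue_mid (hGmb ▸ rfl : F1 (-b) = G (-b)) (hdF1 (-b)) (hG'mb ▸ hdG (-b))
    · rw [hψ_def]; simp only [not_le.mpr hx, if_neg, if_false]
      exact glue_right hx (hdG x)
  have hderiv : deriv φ = ψ := funext fun x => (hdφ x).deriv
  have hcont : Continuous ψ := by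
    rw [hψ_def]
    apply Continuous.if_le _ _ continuous_id continuous_const
    · intro x hx
      simp only [id] at hx
      subst hx
      exact hG'mb.symm
    · rw [hF1'_def]; exact continuous_acexp _ _
    · rw [hG'_def]
      apply Continuous.if_le _ _ continuous_id continuous_const
      · intro x hx
        simp only [id] at hx
        subst hx
        exact j2'
      · rw [hF2'_def]; exact ((continuous_acexp _ _).add (continuous_acexp _ _))
      · rw [hF3'_def]
        exact (continuous_acexp c1 c1).add (continuous_acexp _ _)
  refine ⟨φ, ?_, ?_, ?_, ?_, ?_⟩
  · rw [contDiff_one_iff_deriv]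
    exact ⟨fun x => (hdφ x).differentiableAt, by rw [hderiv]; exact hcont⟩
  · -- differentiability of deriv φ off the junctions
    intro x hx
    simp only [Set.mem_insert_iff, Set.mem_singleton_iff, not_or] at hx
    rw [hderiv]
    rcases lt_trichotomy x (-b) with h1 | h1 | h1
    · have hev : ψ =ᶠ[nhds x] F1' := by
        filter_upwards [Iio_mem_nhds h1] with y hy
        rw [hψ_def]; simp [le_of_lt (Set.mem_Iio.mp hy)]
      exact ((hasDerivAt_amul (Tc*c1) c1 x).differentiableAt.congr_of_eventuallyEq
        (by rw [hF1'_def] at hev; exact hev.mono fun y hy => by simpa [mul_assoc] using hy))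
    · exact absurd h1 hx.1
    · rcases lt_trichotomy x 0 with h2 | h2 | h2
      · have hev : ψ =ᶠ[nhds x] F2' := by
          filter_upwards [Ioo_mem_nhds h1 h2] with y hy
          rw [hψ_def, hG'_def]
          simp [not_le.mpr hy.1, hy.2.le]
        exact (((hasDerivAt_amul (Cc*d1) d1 x).add
          (hasDerivAt_amul (Dc*d2) d2 x)).differentiableAt.congr_of_eventuallyEq
          (by rw [hF2'_def] at hev; exact hev.mono fun y hy => by simpa [mul_assoc] using hy))
      · exact absurd h2 hx.2
      · have hev : ψ =ᶠ[nhds x] F3' := by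
          filter_upwards [Ioi_mem_nhds h2] with y hy
          have hy' : (0:ℝ) < y := Set.mem_Ioi.mp hy
          rw [hψ_def, hG'_def]
          simp [not_le.mpr hy', not_le.mpr (by linarith : -b < y)]
        exact (((hasDerivAt_amul c1 c1 x).add
          (hasDerivAt_amul (Rc*c2) c2 x)).differentiableAt.congr_of_eventuallyEq
          (by rw [hF3'_def] at hev; exact hev.mono fun y hy => by simpa [mul_assoc] using hy))
  · -- the ODE
    intro x hx
    simp only [Set.mem_insert_iff, Set.mem_singleton_iff, not_or] at hx
    rw [hderiv]
    rcases lt_trichotomy x (-b) with h1 | h1 | h1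
    · have hev : ψ =ᶠ[nhds x] F1' := by
        filter_upwards [Iio_mem_nhds h1] with y hy
        rw [hψ_def]; simp [le_of_lt (Set.mem_Iio.mp hy)]
      have hd2 : deriv ψ x = Tc * c1 * c1 * Complex.exp (c1 * x) := by
        rw [hev.deriv_eq, hF1'_def]
        have := (hasDerivAt_amul (Tc*c1) c1 x).deriv
        simpa [mul_assoc] using this
      have hφx : φ x = F1 x := by rw [hφ_def]; simp [h1.le]
      have hV : Vblock a b x = 0 := by
        rw [Vblock, if_neg]; rintro ⟨h', -⟩; linarith
      rw [hd2, hφx, hV, hF1_def]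
      simp only
      linear_combination (-Tc*Complex.exp (c1 * x))*hc1sq
    · exact absurd h1 hx.1
    · rcases lt_trichotomy x 0 with h2 | h2 | h2
      · have hev : ψ =ᶠ[nhds x] F2' := by
          filter_upwards [Ioo_mem_nhds h1 h2] with y hy
          rw [hψ_def, hG'_def]
          simp [not_le.mpr hy.1, hy.2.le]
        have hder : deriv ψ x = Cc * d1 * d1 * Complex.exp (d1 * x)
            + Dc * d2 * d2 * Complex.exp (d2 * x) := by
          rw [hev.deriv_eq, hF2'_def]
          have := ((hasDerivAt_amul (Cc*d1) d1 x).add (hasDerivAt_amul (Dc*d2) d2 x)).deriv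
          simpa [mul_assoc, Pi.add_def] using this
        have hφx : φ x = F2 x := by
          rw [hφ_def, hG_def]; simp [not_le.mpr h1, h2.le]
        have hV : Vblock a b x = -(a:ℂ)^2 := by
          rw [Vblock, if_pos ⟨h1.le, h2.le⟩]
        rw [hder, hφx, hV, hF2_def]
        simp only
        linear_combination (-Cc*Complex.exp (d1 * x))*hd1sq + (-Dc*Complex.exp (d2 * x))*hd2sq
          + (Cc*Complex.exp (d1 * x) + Dc*Complex.exp (d2 * x))*hκ2c
      · exact absurd h2 hx.2
      · have hev : ψ =ᶠ[nhds x] F3' := by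
          filter_upwards [Ioi_mem_nhds h2] with y hy
          have hy' : (0:ℝ) < y := Set.mem_Ioi.mp hy
          rw [hψ_def, hG'_def]
          simp [not_le.mpr hy', not_le.mpr (by linarith : -b < y)]
        have hder : deriv ψ x = c1 * c1 * Complex.exp (c1 * x)
            + Rc * c2 * c2 * Complex.exp (c2 * x) := by
          rw [hev.deriv_eq, hF3'_def]
          have := ((hasDerivAt_amul c1 c1 x).add (hasDerivAt_amul (Rc*c2) c2 x)).deriv
          simpa [mul_assoc, Pi.add_def] using this
        have hφx : φ x = F3 x := by
          rw [hφ_def, hG_def]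
          simp [not_le.mpr h2, not_le.mpr (by linarith : -b < x)]
        have hV : Vblock a b x = 0 := by
          rw [Vblock, if_neg]; rintro ⟨-, h'⟩; linarith
        rw [hder, hφx, hV, hF3_def]
        simp only
        linear_combination (-Complex.exp (c1 * x))*hc1sq + (-Rc*Complex.exp (c2 * x))*hc2sq
  · -- left boundary condition
    intro x hxb
    have hφx : φ x = F1 x := by rw [hφ_def]; simp [hxb]
    rw [hφx, hF1_def, hTc_def, hc1_def]
  · -- right boundary condition
    intro x hx0
    rcases eq_or_lt_of_le hx0 with h | h
    · subst h
      have hφ0 : φ 0 = F2 0 := by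
        rw [hφ_def, hG_def]
        simp [not_le.mpr (by linarith : -b < (0:ℝ))]
      rw [hφ0, j2, hF3_def, hRc_def, hc1_def, hc2_def]
    · have hφx : φ x = F3 x := by
        rw [hφ_def, hG_def]
        simp [not_le.mpr h, not_le.mpr (by linarith : -b < x)]
      rw [hφx, hF3_def, hRc_def, hc1_def, hc2_def]
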